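/- Let s > 1. There exists a constant C > 0, depending only on s and not on k or L, such that for every sequence (c_ξ)_{ξ∈2πℤ/L} of nonnegative numbers, Σ_{ξ∈2πℤ/L} c_ξ ≤ C L^{1/2} ( Σ_{ξ∈2πℤ/L} m(ξ)² c_ξ² )^{1/2}. -/

import Mathlib

open scoped Classical BigOperators ENNReal

noncomputable section

/-- Japanese bracket `⟨x⟩ = (1 + x²)^{1/2}`. -/
def jap (x : ℝ) : ℝ := Real.sqrt (1 + x ^ 2)

/-- The frequency `ξ = 2πn/L ∈ 2πℤ/L`. -/
def freq (L : ℕ) (n : ℤ) : ℝ := 2 * Real.pi * (n : ℝ) / (L : ℝ)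

/-- `τ` is an admissible `𝒩_r`-reduced residue for the integer `M` (where `ξ = 2π(M + j/L)`,
`M = kη̃ + τ̃` with `η̃ ∈ {0,1,3,4}` and `−k/2 < τ̃ ≤ k/2`). -/
def NrWitness (k : ℝ) (M : ℤ) (τ : ℤ) : Prop :=
  ∃ η : ℤ, (η = 0 ∨ η = 1 ∨ η = 3 ∨ η = 4) ∧
    (M : ℝ) = k * (η : ℝ) + (τ : ℝ) ∧ -(k / 2) < (τ : ℝ) ∧ (τ : ℝ) ≤ k / 2

/-- The multiplier `m(ξ)` for `ξ = 2πn/L`, written via `n = L·M + j`, `0 ≤ j < L`: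
`m(ξ) = ⟨τ̃⟩^(s−1/2)` on `𝒩_r`, `⟨k⟩^(s−1/2)` on `𝒩_l \ 𝒩_r`,
`⟨k⟩^(s−1/2)⟨τ⟩^(1/2)` resp. `⟨k⟩^(s−1/2)⟨k−τ⟩^(1/2)` on `𝒩_m` with `ξ > 0` resp. `ξ < 0`,
and `⟨ξ⟩^s` on `𝒩_h`, where `M = kη + τ`, `0 ≤ τ < k`. -/
def mult (s k : ℝ) (L : ℕ) (n : ℤ) : ℝ :=
  let M : ℤ := Int.ediv n (L : ℤ)
  if h : ∃ τ : ℤ, NrWitness k M τ then jap ((h.choose : ℤ) : ℝ) ^ (s - 1 / 2)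
  else
    let η : ℤ := ⌊(M : ℝ) / k⌋
    let τ : ℝ := (M : ℝ) - k * (η : ℝ)
    if -99 ≤ η ∧ η ≤ 98 then jap k ^ (s - 1 / 2)
    else if η = 99 ∨ η = -100 then
      if 0 < n then jap k ^ (s - 1 / 2) * jap τ ^ ((1 : ℝ) / 2)
      else if n < 0 then jap k ^ (s - 1 / 2) * jap (k - τ) ^ ((1 : ℝ) / 2)
      else jap (freq L n) ^ s
    else jap (freq L n) ^ s

-- auxiliary
lemma jap_nonneg (x : ℝ) : 0 ≤ jap x := Real.sqrt_nonneg _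
lemma one_le_jap (x : ℝ) : 1 ≤ jap x := by
  rw [jap]
  have h := Real.sq_sqrt (show (0:ℝ) ≤ 1 + x^2 by positivity)
  nlinarith [Real.sqrt_nonneg (1 + x^2), sq_nonneg x, h]
lemma jap_pos (x : ℝ) : 0 < jap x := lt_of_lt_of_le one_pos (one_le_jap x)
lemma abs_le_jap (x : ℝ) : |x| ≤ jap x := by
  rw [jap]
  rw [show |x| = Real.sqrt (x^2) from (Real.sqrt_sq_eq_abs x).symm]
  exact Real.sqrt_le_sqrt (by nlinarith)

def G1 (s k : ℝ) (M : ℤ) : ℝ :=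
  if h : ∃ τ : ℤ, NrWitness k M τ then jap ((h.choose : ℤ) : ℝ) ^ (1 - 2*s) else 0
def G2 (k : ℝ) (M : ℤ) : ℝ :=
  if -100 ≤ ⌊(M:ℝ)/k⌋ ∧ ⌊(M:ℝ)/k⌋ ≤ 99 then (jap k)⁻¹ else 0
def G3 (s : ℝ) (M : ℤ) : ℝ := (max 1 |(M:ℝ)| / 2) ^ (-(2*s))
def Gt (s k : ℝ) (M : ℤ) : ℝ := G1 s k M + G2 k M + G3 s M

lemma G1_nonneg (s k : ℝ) (M : ℤ) : 0 ≤ G1 s k M := by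
  unfold G1; split
  · exact Real.rpow_nonneg (jap_nonneg _) _
  · exact le_refl 0

lemma G2_nonneg (k : ℝ) (M : ℤ) : 0 ≤ G2 k M := by
  unfold G2; split
  · exact inv_nonneg.2 (jap_nonneg k)
  · exact le_refl 0
lemma G3_nonneg (s : ℝ) (M : ℤ) : 0 ≤ G3 s M := Real.rpow_nonneg (by positivity) _
lemma Gt_nonneg (s k : ℝ) (M : ℤ) : 0 ≤ Gt s k M :=
  add_nonneg (add_nonneg (G1_nonneg s k M) (G2_nonneg k M)) (G3_nonneg s M)

lemma max_half_le_jap_freq (L : ℕ) (hL : 0 < L) (n : ℤ) :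
    max 1 |((Int.ediv n (L:ℤ) : ℤ) : ℝ)| / 2 ≤ jap (freq L n) := by
  set M : ℤ := Int.ediv n (L:ℤ) with hMdef
  have hL' : (0:ℝ) < (L:ℝ) := by exact_mod_cast hL
  set r : ℤ := Int.emod n (L:ℤ) with hrdef
  have hdm : (L:ℤ) * M + r = n := Int.mul_ediv_add_emod n (L:ℤ)
  have hr0 : (0:ℤ) ≤ r := Int.emod_nonneg n (by exact_mod_cast hL.ne')
  have hrL : r < (L:ℤ) := Int.emod_lt_of_pos n (by exact_mod_cast hL)
  have hn : (n:ℝ) = (L:ℝ) * (M:ℝ) + (r : ℝ) := by exact_mod_cast hdm.symm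
  have hr0' : (0:ℝ) ≤ (r:ℝ) := by exact_mod_cast hr0
  have hrL' : (r:ℝ) ≤ (L:ℝ) := by exact_mod_cast hrL.le
  -- L * |M| ≤ |n| + L
  have h1 : (L:ℝ) * |(M:ℝ)| ≤ |(n:ℝ)| + (L:ℝ) := by
    have h2 : |(L:ℝ) * (M:ℝ)| ≤ |(n:ℝ)| + |(r:ℝ)| := by
      have h3 := abs_add_le (n:ℝ) (-(r:ℝ))
      rw [abs_neg] at h3
      calc |(L:ℝ) * (M:ℝ)| = |(n:ℝ) + -(r:ℝ)| := by rw [hn]; ring_nf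
        _ ≤ |(n:ℝ)| + |(r:ℝ)| := h3
    rw [abs_mul, abs_of_pos hL'] at h2
    rw [abs_of_nonneg hr0'] at h2
    linarith
  -- |M| - 1 ≤ |freq L n|
  have hfr : |freq L n| = 2 * Real.pi * |(n:ℝ)| / (L:ℝ) := by
    rw [freq, abs_div, abs_mul, abs_mul, abs_two, abs_of_pos Real.pi_pos, abs_of_pos hL']
  have hpi := Real.pi_gt_three
  have h4 : |(M:ℝ)| - 1 ≤ |freq L n| := by
    rw [hfr]
    rw [le_div_iff₀ hL']
    nlinarith [abs_nonneg (n:ℝ)]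
  have h5 : max 1 (|(M:ℝ)| - 1) ≤ jap (freq L n) :=
    max_le (one_le_jap _) (h4.trans (abs_le_jap _))
  have h6 : max 1 |(M:ℝ)| ≤ 2 * max 1 (|(M:ℝ)| - 1) := by
    rcases le_total |(M:ℝ)| 2 with hc | hc
    · have : max 1 |(M:ℝ)| ≤ 2 := max_le (by norm_num) hc
      nlinarith [le_max_left (1:ℝ) (|(M:ℝ)| - 1)]
    · have : max 1 |(M:ℝ)| = |(M:ℝ)| := max_eq_right (by linarith)
      rw [this]
      nlinarith [le_max_right (1:ℝ) (|(M:ℝ)| - 1)]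
  linarith

lemma one_le_sqrt_mul (s k : ℝ) (hs : 1 ≤ s) (hk : 0 < k) (L : ℕ) (hL : 0 < L) (n : ℤ) :
    1 ≤ Real.sqrt (Gt s k (Int.ediv n (L:ℤ))) * mult s k L n := by
  have hjk := jap_pos k
  have hjk1 := one_le_jap k
  have upg : ∀ g : ℝ, g ≤ Gt s k (Int.ediv n (L:ℤ)) → ∀ m : ℝ, 0 ≤ m →
      1 ≤ Real.sqrt g * m → 1 ≤ Real.sqrt (Gt s k (Int.ediv n (L:ℤ))) * m := by
    intro g hgle m hm h1
    exact h1.trans (mul_le_mul_of_nonneg_right (Real.sqrt_le_sqrt hgle) hm)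
  have hG1le : G1 s k (Int.ediv n (L:ℤ)) ≤ Gt s k (Int.ediv n (L:ℤ)) := by
    rw [Gt]
    nlinarith [G2_nonneg k (Int.ediv n (L:ℤ)), G3_nonneg s (Int.ediv n (L:ℤ))]
  have hG2le : G2 k (Int.ediv n (L:ℤ)) ≤ Gt s k (Int.ediv n (L:ℤ)) := by
    rw [Gt]
    nlinarith [G1_nonneg s k (Int.ediv n (L:ℤ)), G3_nonneg s (Int.ediv n (L:ℤ))]
  have hG3le : G3 s (Int.ediv n (L:ℤ)) ≤ Gt s k (Int.ediv n (L:ℤ)) := by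
    rw [Gt]
    nlinarith [G1_nonneg s k (Int.ediv n (L:ℤ)), G2_nonneg k (Int.ediv n (L:ℤ))]
  have ek : Real.sqrt ((jap k)⁻¹) = jap k ^ (-(1/2) : ℝ) := by
    rw [show (jap k)⁻¹ = jap k ^ (-1 : ℝ) from (Real.rpow_neg_one _).symm,
      Real.sqrt_eq_rpow, ← Real.rpow_mul (jap_nonneg k)]
    norm_num
  have hG3 : 1 ≤ Real.sqrt (G3 s (Int.ediv n (L:ℤ))) * jap (freq L n) ^ s := by
    have hb := max_half_le_jap_freq L hL n
    have hbpos : (0:ℝ) < max 1 |((Int.ediv n (L:ℤ) : ℤ):ℝ)| / 2 := by positivity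
    have e3 : Real.sqrt (G3 s (Int.ediv n (L:ℤ)))
        = (max 1 |((Int.ediv n (L:ℤ) : ℤ):ℝ)| / 2) ^ (-s) := by
      rw [G3, Real.sqrt_eq_rpow, ← Real.rpow_mul hbpos.le]
      congr 1
      ring
    rw [e3, Real.rpow_neg hbpos.le, inv_mul_eq_div, le_div_iff₀ (Real.rpow_pos_of_pos hbpos _),
      one_mul]
    exact Real.rpow_le_rpow hbpos.le hb (by linarith)
  rw [mult]
  by_cases h : ∃ τ : ℤ, NrWitness k (Int.ediv n (L:ℤ)) τ
  · rw [dif_pos h]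
    refine upg (G1 s k (Int.ediv n (L:ℤ))) hG1le _ (Real.rpow_nonneg (jap_nonneg _) _) ?_
    have hpos := jap_pos ((h.choose : ℤ) : ℝ)
    rw [G1, dif_pos h, Real.sqrt_eq_rpow, ← Real.rpow_mul (jap_nonneg _), ← Real.rpow_add hpos,
      show (1 - 2*s) * (1/2) + (s - 1/2) = 0 by ring, Real.rpow_zero]
  · rw [dif_neg h]
    dsimp only
    split_ifs with h1 h2 h3 h4
    · -- N_l case
      refine upg (G2 k (Int.ediv n (L:ℤ))) hG2le _ (Real.rpow_nonneg (jap_nonneg _) _) ?_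
      rw [G2, if_pos (⟨by linarith [h1.1], by linarith [h1.2]⟩ :
          -100 ≤ ⌊(((Int.ediv n (L:ℤ)):ℤ):ℝ)/k⌋ ∧ ⌊(((Int.ediv n (L:ℤ)):ℤ):ℝ)/k⌋ ≤ 99), ek,
        ← Real.rpow_add hjk]
      exact Real.one_le_rpow hjk1 (by linarith)
    · -- N_m, n > 0
      refine upg (G2 k (Int.ediv n (L:ℤ))) hG2le _
        (mul_nonneg (Real.rpow_nonneg (jap_nonneg _) _) (Real.rpow_nonneg (jap_nonneg _) _)) ?_
      have hcond : -100 ≤ ⌊(((Int.ediv n (L:ℤ)):ℤ):ℝ)/k⌋ ∧ ⌊(((Int.ediv n (L:ℤ)):ℤ):ℝ)/k⌋ ≤ 99 := by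
        rcases h2 with h2 | h2 <;> rw [h2] <;> norm_num
      rw [G2, if_pos hcond, ek, ← mul_assoc, ← Real.rpow_add hjk]
      have ha : 1 ≤ jap k ^ (-(1/2) + (s - 1/2)) := Real.one_le_rpow hjk1 (by linarith)
      refine ha.trans (le_mul_of_one_le_right (Real.rpow_nonneg (jap_nonneg _) _) ?_)
      exact Real.one_le_rpow (one_le_jap _) (by norm_num)
    · -- N_m, n < 0
      refine upg (G2 k (Int.ediv n (L:ℤ))) hG2le _
        (mul_nonneg (Real.rpow_nonneg (jap_nonneg _) _) (Real.rpow_nonneg (jap_nonneg _) _)) ?_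
      have hcond : -100 ≤ ⌊(((Int.ediv n (L:ℤ)):ℤ):ℝ)/k⌋ ∧ ⌊(((Int.ediv n (L:ℤ)):ℤ):ℝ)/k⌋ ≤ 99 := by
        rcases h2 with h2 | h2 <;> rw [h2] <;> norm_num
      rw [G2, if_pos hcond, ek, ← mul_assoc, ← Real.rpow_add hjk]
      have ha : 1 ≤ jap k ^ (-(1/2) + (s - 1/2)) := Real.one_le_rpow hjk1 (by linarith)
      refine ha.trans (le_mul_of_one_le_right (Real.rpow_nonneg (jap_nonneg _) _) ?_)
      exact Real.one_le_rpow (one_le_jap _) (by norm_num)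
    · exact upg (G3 s (Int.ediv n (L:ℤ))) hG3le _ (Real.rpow_nonneg (jap_nonneg _) _) hG3
    · exact upg (G3 s (Int.ediv n (L:ℤ))) hG3le _ (Real.rpow_nonneg (jap_nonneg _) _) hG3

def Sconst (s : ℝ) : ℝ≥0∞ := ∑' τ : ℤ, ENNReal.ofReal (jap (τ:ℝ) ^ (1 - 2*s))

lemma summable_jap (s : ℝ) (hs : 1 < s) : Summable (fun τ : ℤ => jap (τ:ℝ) ^ (1 - 2*s)) := by
  have h1 : Summable (fun τ : ℤ => |(τ:ℝ)| ^ (-(2*s - 1))) :=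
    Real.summable_abs_int_rpow (by linarith)
  have h2 : Summable (fun τ : ℤ => if τ = 0 then (1:ℝ) else 0) := by
    apply summable_of_ne_finset_zero (s := ({0} : Finset ℤ))
    intro b hb
    simp only [Finset.mem_singleton] at hb
    rw [if_neg hb]
  refine Summable.of_nonneg_of_le (fun τ => Real.rpow_nonneg (jap_nonneg _) _)
    (fun τ => ?_) (h1.add h2)
  by_cases hτ : τ = 0
  · subst hτ
    simp only [if_pos rfl, Int.cast_zero]
    have h0 : |(0:ℝ)| ^ (-(2*s-1)) = 0 := by
      rw [abs_zero]
      exact Real.zero_rpow (by linarith)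
    rw [h0, zero_add]
    have hj : jap (0:ℝ) = 1 := by
      rw [jap]
      norm_num
    rw [hj, Real.one_rpow]
    norm_num
  · have habs : (1:ℝ) ≤ |(τ:ℝ)| := by
      rw [← Int.cast_abs]
      exact_mod_cast Int.one_le_abs hτ
    have hle : jap (τ:ℝ) ^ (1 - 2*s) ≤ |(τ:ℝ)| ^ (1 - 2*s) :=
      Real.rpow_le_rpow_of_nonpos (by linarith) (abs_le_jap _) (by linarith)
    rw [if_neg hτ, add_zero, show -(2*s - 1) = 1 - 2*s by ring]
    exact hle

lemma Sconst_ne_top (s : ℝ) (hs : 1 < s) : Sconst s ≠ ⊤ := by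
  rw [Sconst, ← ENNReal.ofReal_tsum_of_nonneg (fun τ => Real.rpow_nonneg (jap_nonneg _) _)
    (summable_jap s hs)]
  exact ENNReal.ofReal_ne_top

lemma sum_G1_le (s k : ℝ) :
    ∑' M : ℤ, ENNReal.ofReal (G1 s k M) ≤ 4 * Sconst s := by
  classical
  set T := {M : ℤ | ∃ τ : ℤ, NrWitness k M τ} with hT
  set F : ℤ × ℤ → ℝ≥0∞ := fun p =>
    if p.1 = 0 ∨ p.1 = 1 ∨ p.1 = 3 ∨ p.1 = 4 then ENNReal.ofReal (jap ((p.2 : ℤ):ℝ) ^ (1 - 2*s))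
    else 0 with hF
  have hsupp : Function.support (fun M : ℤ => ENNReal.ofReal (G1 s k M)) ⊆ T := by
    intro M hM
    by_contra hc
    apply hM
    have hc' : ¬ ∃ τ : ℤ, NrWitness k M τ := hc
    simp only [G1, dif_neg hc', ENNReal.ofReal_zero]
  have key : ∀ M : T, ENNReal.ofReal (G1 s k (M : ℤ))
      = F (M.2.choose_spec.choose, M.2.choose) := by
    intro M
    have hη := M.2.choose_spec.choose_spec.1
    rw [G1, dif_pos (show ∃ τ : ℤ, NrWitness k (M:ℤ) τ from M.2), hF]
    simp only
    rw [if_pos hη]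
  calc ∑' M : ℤ, ENNReal.ofReal (G1 s k M)
      = ∑' M : T, ENNReal.ofReal (G1 s k (M : ℤ)) := (tsum_subtype_eq_of_support_subset hsupp).symm
    _ = ∑' M : T, F (M.2.choose_spec.choose, M.2.choose) := tsum_congr key
    _ ≤ ∑' p : ℤ × ℤ, F p := by
        refine ENNReal.tsum_comp_le_tsum_of_injective ?_ F
        intro x y hxy
        have hx := x.2.choose_spec.choose_spec.2.1
        have hy := y.2.choose_spec.choose_spec.2.1
        rw [Prod.mk.injEq] at hxy
        have : ((x:ℤ):ℝ) = ((y:ℤ):ℝ) := by rw [hx, hy, hxy.1, hxy.2]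
        exact Subtype.ext (by exact_mod_cast this)
    _ = 4 * Sconst s := by
        rw [ENNReal.tsum_prod']
        have hin : ∀ a : ℤ, (∑' b : ℤ, F (a, b))
            = if a = 0 ∨ a = 1 ∨ a = 3 ∨ a = 4 then Sconst s else 0 := by
          intro a
          by_cases ha : a = 0 ∨ a = 1 ∨ a = 3 ∨ a = 4
          · rw [if_pos ha]
            rw [Sconst]
            refine tsum_congr fun b => ?_
            rw [hF]
            simp only
            rw [if_pos ha]
          · rw [if_neg ha]
            convert tsum_zero with b
            rw [hF]
            simp only
            rw [if_neg ha]
        rw [tsum_congr hin, tsum_eq_sum (s := ({0,1,3,4} : Finset ℤ))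
          (by intro b hb; rw [if_neg]; simpa using hb)]
        rw [show ({0,1,3,4} : Finset ℤ) = insert 0 (insert 1 (insert 3 ({4} : Finset ℤ))) from rfl]
        rw [Finset.sum_insert (by decide), Finset.sum_insert (by decide),
          Finset.sum_insert (by decide), Finset.sum_singleton]
        norm_num
        ring

lemma sum_G2_le (k : ℝ) (hk : 0 < k) :
    ∑' M : ℤ, ENNReal.ofReal (G2 k M) ≤ ENNReal.ofReal 201 := by
  classical
  set Fk : Finset ℤ := Finset.Icc ⌈(-100)*k⌉ ⌊(100:ℝ)*k⌋ with hFk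
  have hj : max 1 k ≤ jap k := max_le (one_le_jap k) ((le_abs_self k).trans (abs_le_jap k))
  have hjk : (0:ℝ) < jap k := jap_pos k
  have hb : ∀ M : ℤ, ENNReal.ofReal (G2 k M)
      ≤ (if M ∈ Fk then ENNReal.ofReal ((jap k)⁻¹) else 0) := by
    intro M
    rw [G2]
    split_ifs with h1 h2
    · exact le_refl _
    · exfalso
      apply h2
      obtain ⟨ha, hb'⟩ := h1
      rw [hFk, Finset.mem_Icc]
      have hfl : ((⌊(M:ℝ)/k⌋ : ℤ) : ℝ) ≤ (M:ℝ)/k := Int.floor_le _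
      have hha : (-100:ℝ) ≤ ((⌊(M:ℝ)/k⌋ : ℤ) : ℝ) := by exact_mod_cast ha
      have hhb : ((⌊(M:ℝ)/k⌋ : ℤ) : ℝ) ≤ 99 := by exact_mod_cast hb'
      have hlt : (M:ℝ)/k < 100 := by
        have := Int.lt_floor_add_one ((M:ℝ)/k)
        linarith
      constructor
      · rw [Int.ceil_le]
        have h3 : (-100:ℝ) ≤ (M:ℝ)/k := le_trans hha hfl
        have h4 := mul_le_mul_of_nonneg_right h3 hk.le
        rw [div_mul_cancel₀ _ hk.ne'] at h4
        exact_mod_cast h4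
      · rw [Int.le_floor]
        have : (M:ℝ) < 100 * k := by
          rw [div_lt_iff₀ hk] at hlt
          linarith
        linarith
    · simp
    · simp
  calc ∑' M : ℤ, ENNReal.ofReal (G2 k M)
      ≤ ∑' M : ℤ, (if M ∈ Fk then ENNReal.ofReal ((jap k)⁻¹) else 0) := ENNReal.tsum_le_tsum hb
    _ = ∑ M ∈ Fk, (if M ∈ Fk then ENNReal.ofReal ((jap k)⁻¹) else 0) :=
        tsum_eq_sum (by intro b hb'; rw [if_neg hb'])
    _ = ∑ M ∈ Fk, ENNReal.ofReal ((jap k)⁻¹) := Finset.sum_congr rfl (fun x hx => if_pos hx)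
    _ = Fk.card • ENNReal.ofReal ((jap k)⁻¹) := Finset.sum_const _
    _ ≤ ENNReal.ofReal 201 := by
        have hcard : (Fk.card : ℝ) ≤ 200 * k + 1 := by
          rw [hFk, Int.card_Icc]
          have h1 : ((⌊(100:ℝ)*k⌋ : ℤ) : ℝ) ≤ 100*k := Int.floor_le _
          have h2 : (-100)*k ≤ ((⌈(-100)*k⌉ : ℤ) : ℝ) := Int.le_ceil _
          rcases le_or_gt (⌊(100:ℝ)*k⌋ + 1 - ⌈(-100)*k⌉) 0 with hc | hc
          · rw [Int.toNat_of_nonpos hc]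
            norm_num
            nlinarith
          · have he : (((⌊(100:ℝ)*k⌋ + 1 - ⌈(-100)*k⌉).toNat : ℕ) : ℝ)
                = ((⌊(100:ℝ)*k⌋ + 1 - ⌈(-100)*k⌉ : ℤ) : ℝ) := by
              exact_mod_cast congrArg (Int.cast : ℤ → ℝ) (Int.toNat_of_nonneg hc.le)
            rw [he]
            push_cast
            linarith
        have hreal : (Fk.card : ℝ) * (jap k)⁻¹ ≤ 201 := by
          have h201 : (Fk.card : ℝ) ≤ 201 * jap k := by
            nlinarith [le_max_left (1:ℝ) k, le_max_right (1:ℝ) k]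
          calc (Fk.card : ℝ) * (jap k)⁻¹ ≤ (201 * jap k) * (jap k)⁻¹ :=
                mul_le_mul_of_nonneg_right h201 (inv_nonneg.2 hjk.le)
            _ = 201 := by field_simp
        calc Fk.card • ENNReal.ofReal ((jap k)⁻¹)
            = (Fk.card : ℝ≥0∞) * ENNReal.ofReal ((jap k)⁻¹) := nsmul_eq_mul _ _
          _ = ENNReal.ofReal ((Fk.card : ℝ) * (jap k)⁻¹) := by
              rw [ENNReal.ofReal_mul (by positivity), ENNReal.ofReal_natCast]
          _ ≤ ENNReal.ofReal 201 := ENNReal.ofReal_le_ofReal hreal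

def D3 (s : ℝ) : ℝ≥0∞ := ∑' M : ℤ, ENNReal.ofReal (G3 s M)

lemma summable_G3 (s : ℝ) (hs : 1 < s) : Summable (fun M : ℤ => G3 s M) := by
  have h1 : Summable (fun M : ℤ => |(M:ℝ)| ^ (-(2*s))) :=
    Real.summable_abs_int_rpow (by linarith)
  have h2 : Summable (fun M : ℤ => if M = 0 then (1:ℝ) else 0) := by
    apply summable_of_ne_finset_zero (s := ({0} : Finset ℤ))
    intro b hb
    simp only [Finset.mem_singleton] at hb
    rw [if_neg hb]
  have hsum : Summable (fun M : ℤ => (2:ℝ)^(2*s) * (|(M:ℝ)| ^ (-(2*s)) + if M = 0 then (1:ℝ) else 0)) :=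
    (h1.add h2).mul_left _
  refine Summable.of_nonneg_of_le (fun M => G3_nonneg s M) (fun M => ?_) hsum
  by_cases hM : M = 0
  · subst hM
    have hmax : max (1:ℝ) |((0:ℤ):ℝ)| / 2 = 2⁻¹ := by norm_num
    rw [G3, hmax, Real.inv_rpow (by norm_num), ← Real.rpow_neg (by norm_num), neg_neg]
    simp only [Int.cast_zero, abs_zero, if_pos rfl]
    rw [Real.zero_rpow (by linarith), zero_add, if_pos trivial, mul_one]
  · have habs : (1:ℝ) ≤ |(M:ℝ)| := by
      rw [← Int.cast_abs]
      exact_mod_cast Int.one_le_abs hM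
    rw [G3, max_eq_right habs, if_neg hM, add_zero]
    rw [div_eq_mul_inv, Real.mul_rpow (abs_nonneg _) (by norm_num),
      Real.inv_rpow (by norm_num), ← Real.rpow_neg (by norm_num)]
    rw [mul_comm]
    norm_num

lemma D3_ne_top (s : ℝ) (hs : 1 < s) : D3 s ≠ ⊤ := by
  rw [D3, ← ENNReal.ofReal_tsum_of_nonneg (fun M => G3_nonneg s M) (summable_G3 s hs)]
  exact ENNReal.ofReal_ne_top

def Dconst (s : ℝ) : ℝ≥0∞ := 4 * Sconst s + ENNReal.ofReal 201 + D3 s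

lemma Dconst_ne_top (s : ℝ) (hs : 1 < s) : Dconst s ≠ ⊤ := by
  rw [Dconst]
  have h1 := Sconst_ne_top s hs
  have h2 := D3_ne_top s hs
  finiteness

lemma sum_Gt_le (s k : ℝ) (hs : 1 < s) (hk : 0 < k) :
    ∑' M : ℤ, ENNReal.ofReal (Gt s k M) ≤ Dconst s := by
  have hb : ∀ M : ℤ, ENNReal.ofReal (Gt s k M)
      ≤ ENNReal.ofReal (G1 s k M) + ENNReal.ofReal (G2 k M) + ENNReal.ofReal (G3 s M) := by
    intro M
    rw [Gt]
    exact le_trans (ENNReal.ofReal_add_le) (add_le_add_left ENNReal.ofReal_add_le _)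
  calc ∑' M : ℤ, ENNReal.ofReal (Gt s k M)
      ≤ ∑' M : ℤ, (ENNReal.ofReal (G1 s k M) + ENNReal.ofReal (G2 k M) + ENNReal.ofReal (G3 s M)) :=
        ENNReal.tsum_le_tsum hb
    _ = (∑' M : ℤ, ENNReal.ofReal (G1 s k M)) + (∑' M : ℤ, ENNReal.ofReal (G2 k M))
        + (∑' M : ℤ, ENNReal.ofReal (G3 s M)) := by
        rw [ENNReal.tsum_add, ENNReal.tsum_add]
    _ ≤ Dconst s := by
        rw [Dconst]
        exact add_le_add (add_le_add (sum_G1_le s k) (sum_G2_le k hk)) (le_refl (D3 s))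

def edivEquiv (L : ℕ) (hL : 0 < L) : ℤ × Fin L ≃ ℤ where
  toFun := fun p => (L:ℤ) * p.1 + (p.2 : ℤ)
  invFun := fun n => (Int.ediv n (L:ℤ), ⟨(Int.emod n (L:ℤ)).toNat, by
    have h1 : Int.emod n (L:ℤ) < (L:ℤ) := Int.emod_lt_of_pos n (by exact_mod_cast hL)
    have h0 : 0 ≤ Int.emod n (L:ℤ) := Int.emod_nonneg n (by exact_mod_cast hL.ne')
    omega⟩)
  left_inv := fun p => by
    obtain ⟨M, j⟩ := p
    have hj0 : (0:ℤ) ≤ (j:ℤ) := by exact_mod_cast Nat.zero_le j.1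
    have hjL : ((j:ℤ)) < (L:ℤ) := by exact_mod_cast j.2
    have hL' : ((L:ℤ)) ≠ 0 := by exact_mod_cast hL.ne'
    have hdiv : Int.ediv ((L:ℤ) * M + (j : ℤ)) (L:ℤ) = M := by
      show ((L:ℤ) * M + (j : ℤ)) / (L:ℤ) = M
      rw [show (L:ℤ) * M + (j:ℤ) = (j:ℤ) + M * (L:ℤ) by ring]
      rw [Int.add_mul_ediv_right _ _ hL', Int.ediv_eq_zero_of_lt hj0 hjL, zero_add]
    have hmod : Int.emod ((L:ℤ) * M + (j : ℤ)) (L:ℤ) = (j:ℤ) := by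
      show ((L:ℤ) * M + (j : ℤ)) % (L:ℤ) = (j:ℤ)
      rw [show (L:ℤ) * M + (j:ℤ) = (j:ℤ) + M * (L:ℤ) by ring, Int.add_mul_emod_self_right,
        Int.emod_eq_of_lt hj0 hjL]
    simp only
    refine Prod.ext hdiv (Fin.ext ?_)
    simp only [hmod]
    omega
  right_inv := fun n => by
    have h0 : 0 ≤ Int.emod n (L:ℤ) := Int.emod_nonneg n (by exact_mod_cast hL.ne')
    simp only
    rw [Int.toNat_of_nonneg h0]
    exact Int.mul_ediv_add_emod n (L:ℤ)

lemma edivEquiv_fst (L : ℕ) (hL : 0 < L) (p : ℤ × Fin L) :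
    Int.ediv (edivEquiv L hL p) (L:ℤ) = p.1 := by
  show Int.ediv ((L:ℤ) * p.1 + (p.2 : ℤ)) (L:ℤ) = p.1
  have hj0 : (0:ℤ) ≤ (p.2:ℤ) := by exact_mod_cast Nat.zero_le p.2.1
  have hjL : ((p.2:ℤ)) < (L:ℤ) := by exact_mod_cast p.2.2
  have hL' : ((L:ℤ)) ≠ 0 := by exact_mod_cast hL.ne'
  show ((L:ℤ) * p.1 + (p.2 : ℤ)) / (L:ℤ) = p.1
  rw [show (L:ℤ) * p.1 + (p.2:ℤ) = (p.2:ℤ) + p.1 * (L:ℤ) by ring]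
  rw [Int.add_mul_ediv_right _ _ hL', Int.ediv_eq_zero_of_lt hj0 hjL, zero_add]

lemma tsum_comp_ediv (L : ℕ) (hL : 0 < L) (f : ℤ → ℝ≥0∞) :
    ∑' n : ℤ, f (Int.ediv n (L:ℤ)) = (L : ℝ≥0∞) * ∑' M : ℤ, f M := by
  calc ∑' n : ℤ, f (Int.ediv n (L:ℤ))
      = ∑' p : ℤ × Fin L, f (Int.ediv (edivEquiv L hL p) (L:ℤ)) :=
        ((edivEquiv L hL).tsum_eq (fun n => f (Int.ediv n (L:ℤ)))).symm
    _ = ∑' p : ℤ × Fin L, f p.1 := tsum_congr (fun p => by rw [edivEquiv_fst L hL p])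
    _ = ∑' M : ℤ, ∑' _j : Fin L, f M := ENNReal.tsum_prod'
    _ = ∑' M : ℤ, (L : ℝ≥0∞) * f M := by
        refine tsum_congr fun M => ?_
        rw [tsum_fintype, Finset.sum_const, Finset.card_univ, Fintype.card_fin, nsmul_eq_mul]
    _ = (L : ℝ≥0∞) * ∑' M : ℤ, f M := ENNReal.tsum_mul_left

/-- part of Lemma 5.1. `Σ_ξ c_ξ ≲ L^{1/2} (Σ_ξ m(ξ)² c_ξ²)^{1/2}`,
uniformly in `k` and `L`. -/
theorem stmt_13 (s : ℝ) (hs : 1 < s) :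
    ∃ C : ℝ, 0 < C ∧ ∀ (L : ℕ) (k : ℝ), 0 < L → 0 < k →
      (∃ K : ℕ, (K : ℝ) = (L : ℝ) * k) →
      ∀ c : ℤ → ℝ, (∀ n, 0 ≤ c n) →
        ∑' n : ℤ, ENNReal.ofReal (c n) ≤
          ENNReal.ofReal (C * Real.sqrt (L : ℝ)) *
            (∑' n : ℤ, ENNReal.ofReal (mult s k L n ^ 2 * c n ^ 2)) ^ ((1 : ℝ) / 2) := by
  classical
  have hDne : Dconst s ≠ ⊤ := Dconst_ne_top s hs
  set C : ℝ := (Dconst s).toReal ^ ((1:ℝ)/2) + 1 with hC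
  have hCpos : 0 < C := by positivity
  refine ⟨C, hCpos, ?_⟩
  intro L k hL hk _ c hc
  set A : ℤ → ℝ≥0∞ := fun n => ENNReal.ofReal (Gt s k (Int.ediv n (L:ℤ))) with hA
  set B : ℤ → ℝ≥0∞ := fun n => ENNReal.ofReal (mult s k L n ^ 2 * c n ^ 2) with hB
  have hmultnn : ∀ n : ℤ, 0 ≤ mult s k L n := by
    intro n
    by_contra h'
    push_neg at h'
    have h1 := one_le_sqrt_mul s k hs.le hk L hL n
    have h2 := mul_nonpos_of_nonneg_of_nonpos (Real.sqrt_nonneg (Gt s k (Int.ediv n (L:ℤ)))) h'.le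
    linarith
  have hpt : ∀ n : ℤ, ENNReal.ofReal (c n) ≤ A n ^ ((1:ℝ)/2) * B n ^ ((1:ℝ)/2) := by
    intro n
    have hsq : Real.sqrt (mult s k L n ^ 2 * c n ^ 2) = mult s k L n * c n := by
      rw [show mult s k L n ^ 2 * c n ^ 2 = (mult s k L n * c n)^2 by ring,
        Real.sqrt_sq (mul_nonneg (hmultnn n) (hc n))]
    have h1 : c n ≤ Real.sqrt (Gt s k (Int.ediv n (L:ℤ)))
        * Real.sqrt (mult s k L n ^ 2 * c n ^ 2) := by
      rw [hsq, ← mul_assoc]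
      nlinarith [one_le_sqrt_mul s k hs.le hk L hL n, hc n]
    calc ENNReal.ofReal (c n)
        ≤ ENNReal.ofReal (Real.sqrt (Gt s k (Int.ediv n (L:ℤ)))
            * Real.sqrt (mult s k L n ^ 2 * c n ^ 2)) := ENNReal.ofReal_le_ofReal h1
      _ = A n ^ ((1:ℝ)/2) * B n ^ ((1:ℝ)/2) := by
          rw [ENNReal.ofReal_mul (Real.sqrt_nonneg _), hA, hB]
          simp only
          rw [Real.sqrt_eq_rpow, Real.sqrt_eq_rpow,
            ENNReal.ofReal_rpow_of_nonneg (Gt_nonneg s k _) (by norm_num),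
            ENNReal.ofReal_rpow_of_nonneg (by positivity) (by norm_num)]
  have hCS : ∑' n : ℤ, A n ^ ((1:ℝ)/2) * B n ^ ((1:ℝ)/2) ≤
      (∑' n : ℤ, A n) ^ ((1:ℝ)/2) * (∑' n : ℤ, B n) ^ ((1:ℝ)/2) := by
    have hconj : Real.HolderConjugate 2 2 := ⟨by norm_num, by norm_num, by norm_num⟩
    have h := ENNReal.lintegral_mul_le_Lp_mul_Lq (MeasureTheory.Measure.count (α := ℤ)) hconj
      (f := fun n => A n ^ ((1:ℝ)/2)) (g := fun n => B n ^ ((1:ℝ)/2))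
      (measurable_of_countable _).aemeasurable (measurable_of_countable _).aemeasurable
    rw [MeasureTheory.lintegral_count, MeasureTheory.lintegral_count,
      MeasureTheory.lintegral_count] at h
    have e2 : ∀ x : ℝ≥0∞, (x ^ ((1:ℝ)/2)) ^ (2:ℝ) = x := by
      intro x
      rw [← ENNReal.rpow_mul]
      norm_num
    calc ∑' n : ℤ, A n ^ ((1:ℝ)/2) * B n ^ ((1:ℝ)/2)
        = ∑' n : ℤ, ((fun n => A n ^ ((1:ℝ)/2)) * (fun n => B n ^ ((1:ℝ)/2))) n := by
          refine tsum_congr fun n => ?_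
          simp [Pi.mul_apply]
      _ ≤ (∑' n : ℤ, (A n ^ ((1:ℝ)/2)) ^ (2:ℝ)) ^ ((1:ℝ)/2)
          * (∑' n : ℤ, (B n ^ ((1:ℝ)/2)) ^ (2:ℝ)) ^ ((1:ℝ)/2) := h
      _ = (∑' n : ℤ, A n) ^ ((1:ℝ)/2) * (∑' n : ℤ, B n) ^ ((1:ℝ)/2) := by
          simp only [e2]
  have hsumA : (∑' n : ℤ, A n) ≤ (L : ℝ≥0∞) * Dconst s := by
    rw [hA]
    rw [tsum_comp_ediv L hL (fun M => ENNReal.ofReal (Gt s k M))]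
    exact mul_le_mul_right (sum_Gt_le s k hs hk) _
  have hfin : (∑' n : ℤ, A n) ^ ((1:ℝ)/2) ≤ ENNReal.ofReal (C * Real.sqrt (L:ℝ)) := by
    calc (∑' n : ℤ, A n) ^ ((1:ℝ)/2)
        ≤ ((L : ℝ≥0∞) * Dconst s) ^ ((1:ℝ)/2) := ENNReal.rpow_le_rpow hsumA (by norm_num)
      _ = (L : ℝ≥0∞) ^ ((1:ℝ)/2) * (Dconst s) ^ ((1:ℝ)/2) :=
          ENNReal.mul_rpow_of_nonneg _ _ (by norm_num)
      _ ≤ ENNReal.ofReal (Real.sqrt (L:ℝ)) * ENNReal.ofReal C := by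
          refine mul_le_mul' ?_ ?_
          · rw [show ((L:ℝ≥0∞)) = ENNReal.ofReal ((L:ℕ):ℝ) from (ENNReal.ofReal_natCast L).symm,
              ENNReal.ofReal_rpow_of_nonneg (Nat.cast_nonneg L) (by norm_num : (0:ℝ) ≤ 1/2),
              Real.sqrt_eq_rpow]
          · rw [show Dconst s = ENNReal.ofReal ((Dconst s).toReal) from
                (ENNReal.ofReal_toReal hDne).symm,
              ENNReal.ofReal_rpow_of_nonneg ENNReal.toReal_nonneg (by norm_num : (0:ℝ) ≤ 1/2)]
            refine ENNReal.ofReal_le_ofReal ?_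
            rw [hC]
            linarith
      _ = ENNReal.ofReal (C * Real.sqrt (L:ℝ)) := by
          rw [← ENNReal.ofReal_mul (Real.sqrt_nonneg _), mul_comm]
  calc ∑' n : ℤ, ENNReal.ofReal (c n)
      ≤ ∑' n : ℤ, A n ^ ((1:ℝ)/2) * B n ^ ((1:ℝ)/2) := ENNReal.tsum_le_tsum hpt
    _ ≤ (∑' n : ℤ, A n) ^ ((1:ℝ)/2) * (∑' n : ℤ, B n) ^ ((1:ℝ)/2) := hCS
    _ ≤ ENNReal.ofReal (C * Real.sqrt (L:ℝ)) * (∑' n : ℤ, B n) ^ ((1:ℝ)/2) :=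
        mul_le_mul_left hfin _
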